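/- The infinite Thue word t = τ^ω(0) is 2-irreducibly square-free: deleting any occurrence of a factor of length 2 at a position ≥ 1 creates a square in the resulting infinite word. -/

import Mathlib

/-- A word has a square if some nonempty `u` with `u ++ u` an infix. -/
def HasSquare (w : List (Fin 3)) : Prop :=
  ∃ u : List (Fin 3), u ≠ [] ∧ (u ++ u) <:+: w

def SquareFree (w : List (Fin 3)) : Prop := ¬ HasSquare w

/-- `u` occurs as a factor of the infinite word `x`. -/
def InfFactor (u : List (Fin 3)) (x : ℕ → Fin 3) : Prop :=
  ∃ m : ℕ, ∀ i < u.length, u.getD i 0 = x (m + i)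

def InfSquareFree (x : ℕ → Fin 3) : Prop :=
  ¬ ∃ u : List (Fin 3), u ≠ [] ∧ InfFactor (u ++ u) x

/-- A square-free word is irreducibly square-free if deleting any interior
letter creates a square. -/
def IrrSF (w : List (Fin 3)) : Prop :=
  SquareFree w ∧
    ∀ (w1 w2 : List (Fin 3)) (a : Fin 3),
      w = w1 ++ [a] ++ w2 → w1 ≠ [] → w2 ≠ [] → HasSquare (w1 ++ w2)

/-- The Thue morphism τ(0)=012, τ(1)=02, τ(2)=1. -/
def tau : Fin 3 → List (Fin 3) := ![[0,1,2], [0,2], [1]]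

def tauW (w : List (Fin 3)) : List (Fin 3) := w.flatMap tau

/-- The Thue word `t = τ^ω(0)`: the `n`-th letter of the fixed point of τ. -/
def thue (n : ℕ) : Fin 3 := ((tauW^[n+1]) [0]).getD n 0

/-- Deleting the two letters at positions `n, n+1` of an infinite word. -/
def delTwoAt (x : ℕ → Fin 3) (n : ℕ) (m : ℕ) : Fin 3 :=
  if m < n then x m else x (m + 2)


def tmA : ℕ → ℕ → Bool
  | 0, _ => false
  | f+1, n => if n = 0 then false else ((n % 2 == 1) != tmA f (n / 2))

def tmb (n : ℕ) : Bool := tmA n n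

lemma tmA_congr : ∀ n f f', n ≤ f → n ≤ f' → tmA f n = tmA f' n := by
  intro n
  induction n using Nat.strong_induction_on with
  | _ n ih =>
    intro f f' hf hf'
    rcases Nat.eq_zero_or_pos n with rfl | hn
    · cases f <;> cases f' <;> simp [tmA]
    · obtain ⟨g, rfl⟩ : ∃ g, f = g + 1 := ⟨f - 1, by omega⟩
      obtain ⟨g', rfl⟩ : ∃ g', f' = g' + 1 := ⟨f' - 1, by omega⟩
      have h2 : n / 2 < n := Nat.div_lt_self hn (by norm_num)
      simp only [tmA, if_neg (by omega : ¬ n = 0)]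
      rw [ih (n/2) h2 g g' (by omega) (by omega)]

lemma tmb_zero : tmb 0 = false := rfl
lemma tmb_one : tmb 1 = true := by decide

lemma tmb_two_mul (n : ℕ) : tmb (2*n) = tmb n := by
  rcases Nat.eq_zero_or_pos n with rfl | hn
  · rfl
  · have : tmb (2*n) = tmA (2*n) (2*n) := rfl
    obtain ⟨g, hg⟩ : ∃ g, 2*n = g + 1 := ⟨2*n - 1, by omega⟩
    rw [this, hg]
    simp only [tmA, if_neg (by omega : ¬ g + 1 = 0)]
    have h1 : (g+1) % 2 = 0 := by omega
    have h2 : (g+1) / 2 = n := by omega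
    rw [h1, h2]
    have h3 : tmA g n = tmA n n := tmA_congr n g n (by omega) le_rfl
    rw [h3]
    have h4 : tmA n n = tmb n := rfl
    rw [h4]
    cases tmb n <;> simp

lemma tmb_two_mul_add_one (n : ℕ) : tmb (2*n+1) = !tmb n := by
  have : tmb (2*n+1) = tmA (2*n+1) (2*n+1) := rfl
  rw [this]
  simp only [tmA, if_neg (by omega : ¬ 2*n+1 = 0)]
  have h1 : (2*n+1) % 2 = 1 := by omega
  have h2 : (2*n+1) / 2 = n := by omega
  rw [h1, h2, tmA_congr n (2*n) n (by omega) le_rfl]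
  have h3 : tmA n n = tmb n := rfl
  rw [h3]
  cases tmb n <;> simp

lemma tmb_succ_even {k : ℕ} (h : k % 2 = 0) : tmb (k+1) = !tmb k := by
  obtain ⟨c, rfl⟩ : ∃ c, k = 2*c := ⟨k/2, by omega⟩
  rw [tmb_two_mul_add_one, tmb_two_mul]

lemma no3 (k : ℕ) : ¬ (tmb k = tmb (k+1) ∧ tmb (k+1) = tmb (k+2)) := by
  rintro ⟨h1, h2⟩
  rcases Nat.even_or_odd k with ⟨c, hc⟩ | ⟨c, hc⟩
  · have := tmb_succ_even (k := k) (by omega)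
    rw [← h1] at this
    simp at this
  · have := tmb_succ_even (k := k+1) (by omega)
    rw [← h2] at this
    simp at this

theorem tmOF : ∀ p, 1 ≤ p → ∀ m, ¬ (∀ j ≤ p, tmb (m+j) = tmb (m+p+j)) := by
  intro p
  induction p using Nat.strong_induction_on with
  | _ p ih =>
    intro hp m H
    rcases Nat.even_or_odd p with ⟨q, hq⟩ | hodd
    · -- p = q + q even
      have hq1 : 1 ≤ q := by omega
      have H' : ∀ j ≤ q, tmb (m/2 + j) = tmb (m/2 + q + j) := by
        intro j hj
        have h2j : 2*j ≤ p := by omega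
        have := H (2*j) h2j
        rcases Nat.even_or_odd m with ⟨c, hc⟩ | ⟨c, hc⟩
        · have e1 : m + 2*j = 2*(c+j) := by omega
          have e2 : m + p + 2*j = 2*(c+q+j) := by omega
          rw [e1, e2, tmb_two_mul, tmb_two_mul] at this
          have e3 : m/2 + j = c + j := by omega
          have e4 : m/2 + q + j = c + q + j := by omega
          rw [e3, e4]; exact this
        · have e1 : m + 2*j = 2*(c+j)+1 := by omega
          have e2 : m + p + 2*j = 2*(c+q+j)+1 := by omega
          rw [e1, e2, tmb_two_mul_add_one, tmb_two_mul_add_one] at this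
          have e3 : m/2 + j = c + j := by omega
          have e4 : m/2 + q + j = c + q + j := by omega
          rw [e3, e4]
          exact Bool.not_inj this
      exact ih q (by omega) hq1 (m/2) H'
    · -- p odd
      obtain ⟨r, hr⟩ := hodd
      rcases Nat.lt_or_ge p 3 with h3 | h3
      · -- p = 1
        have hp1 : p = 1 := by omega
        subst hp1
        have h0 := H 0 (by omega)
        have h1 := H 1 (by omega)
        simp only [Nat.add_zero] at h0
        exact no3 m ⟨by simpa using h0, by
          have : m + 1 + 1 = m + 2 := by omega
          simpa [this] using h1⟩
      · -- p odd, p ≥ 3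
        have per2 : ∀ j, m ≤ j → j + 2 ≤ m + p → tmb (j+2) = tmb j := by
          intro j hj hj2
          obtain ⟨d, rfl⟩ := Nat.exists_eq_add_of_le hj
          rcases Nat.even_or_odd (m + d) with ⟨c, hc⟩ | ⟨c, hc⟩
          · -- j even
            have hA : tmb (m+d+2) = tmb (m+d+2+p) := by
              have := H (d+2) (by omega)
              have e : m + (d+2) = m + d + 2 := by omega
              have e2 : m + p + (d+2) = m + d + 2 + p := by omega
              rw [e, e2] at this; exact this
            have hB : tmb (m+d+2+p) = !tmb (m+d+1+p) := by
              have h := tmb_succ_even (k := m+d+1+p) (by omega)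
              have e : m+d+1+p+1 = m+d+2+p := by omega
              rw [e] at h; exact h
            have hC : tmb (m+d+1+p) = tmb (m+d+1) := by
              have := H (d+1) (by omega)
              have e : m + (d+1) = m+d+1 := by omega
              have e2 : m + p + (d+1) = m+d+1+p := by omega
              rw [e, e2] at this; exact this.symm
            have hD : tmb (m+d+1) = !tmb (m+d) := tmb_succ_even (by omega)
            rw [hA, hB, hC, hD, Bool.not_not]
          · -- j odd
            have hD : tmb (m+d+2) = !tmb (m+d+1) := by
              have h := tmb_succ_even (k := m+d+1) (by omega)
              have e : m+d+1+1 = m+d+2 := by omega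
              rw [e] at h; exact h
            have hC : tmb (m+d+1) = tmb (m+d+1+p) := by
              have := H (d+1) (by omega)
              have e : m + (d+1) = m+d+1 := by omega
              have e2 : m + p + (d+1) = m+d+1+p := by omega
              rw [e, e2] at this; exact this
            have hB : tmb (m+d+1+p) = !tmb (m+d+p) := by
              have h := tmb_succ_even (k := m+d+p) (by omega)
              have e : m+d+p+1 = m+d+1+p := by omega
              rw [e] at h; exact h
            have hA : tmb (m+d+p) = tmb (m+d) := by
              have := H d (by omega)
              have e2 : m + p + d = m+d+p := by omega
              rw [e2] at this; exact this.symm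
            rw [hD, hC, hB, hA, Bool.not_not]
        rcases Nat.lt_or_ge p 5 with h5 | h5
        · -- p = 3
          have hp3 : p = 3 := by omega
          subst hp3
          rcases Nat.even_or_odd m with ⟨c, hc⟩ | ⟨c, hc⟩
          · have h0 : tmb m = tmb (m+3) := by simpa using H 0 (by omega)
            have h1 : tmb (m+3) = !tmb (m+2) := by
              have h := tmb_succ_even (k := m+2) (by omega)
              have e : m+2+1 = m+3 := by omega
              rw [e] at h; exact h
            have h2 : tmb (m+2) = tmb m := per2 m le_rfl (by omega)
            rw [h1, h2] at h0
            simp at h0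
          · have h0 : tmb (m+1) = tmb (m+4) := by
              have := H 1 (by omega)
              have e : m + 3 + 1 = m + 4 := by omega
              rw [e] at this; exact this
            have h1 : tmb (m+4) = !tmb (m+3) := by
              have h := tmb_succ_even (k := m+3) (by omega)
              have e : m+3+1 = m+4 := by omega
              rw [e] at h; exact h
            have h2 : tmb (m+3) = tmb (m+1) := per2 (m+1) (by omega) (by omega)
            rw [h1, h2] at h0
            simp at h0
        · -- p odd ≥ 5
          obtain ⟨e, he, hee⟩ : ∃ e, (m ≤ e ∧ e ≤ m + 1) ∧ e % 2 = 0 := by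
            rcases Nat.even_or_odd m with ⟨c, hc⟩ | ⟨c, hc⟩
            · exact ⟨m, ⟨le_rfl, by omega⟩, by omega⟩
            · exact ⟨m+1, ⟨by omega, le_rfl⟩, by omega⟩
          have q1 : tmb (e+2) = tmb e := per2 e he.1 (by omega)
          have q2 : tmb (e+4) = tmb (e+2) := by
            have := per2 (e+2) (by omega) (by omega)
            have ee : e+2+2 = e+4 := by omega
            rw [ee] at this; exact this
          obtain ⟨c, rfl⟩ : ∃ c, e = 2*c := ⟨e/2, by omega⟩
          have r1 : tmb (2*c+2) = tmb (c+1) := by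
            have : 2*c+2 = 2*(c+1) := by omega
            rw [this, tmb_two_mul]
          have r2 : tmb (2*c+4) = tmb (c+2) := by
            have : 2*c+4 = 2*(c+2) := by omega
            rw [this, tmb_two_mul]
          rw [tmb_two_mul, r1] at q1
          rw [r1, r2] at q2
          exact no3 c ⟨q1.symm, q2.symm⟩

def gl (a b : Bool) : Fin 3 := if a = b then 1 else if a then 2 else 0
def gg (n : ℕ) : Fin 3 := gl (tmb n) (tmb (n+1))

def wseq (k : ℕ) : List (Fin 3) := (tauW)^[k] [0]

lemma tauW_cons (c : Fin 3) (l : List (Fin 3)) : tauW (c :: l) = tau c ++ tauW l := by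
  simp [tauW]

lemma tauW_append (a b : List (Fin 3)) : tauW (a ++ b) = tauW a ++ tauW b := by
  simp [tauW]

lemma wseq_succ (k : ℕ) : wseq (k+1) = tauW (wseq k) :=
  Function.iterate_succ_apply' tauW k [0]

lemma wseq_head : ∀ k, ∃ r, wseq k = 0 :: r := by
  intro k
  induction k with
  | zero => exact ⟨[], rfl⟩
  | succ k ih =>
    obtain ⟨r, hr⟩ := ih
    refine ⟨[1,2] ++ tauW r, ?_⟩
    rw [wseq_succ, hr, tauW_cons]
    rfl

lemma tauW_len (l : List (Fin 3)) : l.length ≤ (tauW l).length := by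
  induction l with
  | nil => simp [tauW]
  | cons c l ih =>
    rw [tauW_cons]
    have : 1 ≤ (tau c).length := by fin_cases c <;> decide
    simp only [List.length_append, List.length_cons]
    omega

lemma wseq_len (k : ℕ) : 2*k+1 ≤ (wseq k).length := by
  induction k with
  | zero => decide
  | succ k ih =>
    obtain ⟨r, hr⟩ := wseq_head k
    have h1 : (wseq k).length = r.length + 1 := by rw [hr]; simp
    rw [wseq_succ, hr, tauW_cons]
    have h2 : r.length ≤ (tauW r).length := tauW_len r
    have h3 : (tau 0).length = 3 := by decide
    simp only [List.length_append, h3]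
    omega

lemma wseq_prefix (k : ℕ) : wseq k <+: wseq (k+1) := by
  induction k with
  | zero => exact ⟨[1,2], rfl⟩
  | succ k ih =>
    obtain ⟨t, ht⟩ := ih
    have h2 : wseq (k+1+1) = wseq (k+1) ++ tauW t := by
      rw [wseq_succ (k+1)]
      conv_lhs => rw [← ht]
      rw [tauW_append, ← wseq_succ k]
    exact ⟨tauW t, h2.symm⟩

lemma wseq_prefix_le {k l : ℕ} (h : k ≤ l) : wseq k <+: wseq l := by
  induction l with
  | zero => simp_all
  | succ l ih =>
    rcases Nat.lt_or_ge k (l+1) with h' | h'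
    · exact (ih (by omega)).trans (wseq_prefix l)
    · have : k = l + 1 := by omega
      subst this; rfl

lemma getD_of_prefix {u v : List (Fin 3)} (h : u <+: v) {n : ℕ} (hn : n < u.length) :
    u.getD n 0 = v.getD n 0 := by
  obtain ⟨t, rfl⟩ := h
  rw [List.getD_append _ _ _ _ hn]

lemma thue_eval (k n : ℕ) (h : n < (wseq k).length) : (wseq k).getD n 0 = thue n := by
  have hn1 : n < (wseq (n+1)).length := by have := wseq_len (n+1); omega
  show (wseq k).getD n 0 = (wseq (n+1)).getD n 0
  rcases Nat.le_total k (n+1) with hk | hk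
  · exact getD_of_prefix (wseq_prefix_le hk) h
  · exact (getD_of_prefix (wseq_prefix_le hk) hn1).symm

def pref (m : ℕ) : List (Fin 3) := (List.range m).map thue

lemma pref_eq_take (k m : ℕ) (h : m ≤ (wseq k).length) : pref m = (wseq k).take m := by
  apply List.ext_getElem
  · simp [pref]; omega
  · intro i h1 h2
    simp only [pref, List.getElem_map, List.getElem_range, List.getElem_take]
    have hi : i < m := by simpa [pref] using h1
    have hik : i < (wseq k).length := by omega
    rw [← thue_eval k i hik, List.getD_eq_getElem _ _ hik]

def posB (m : ℕ) : ℕ := (tauW (pref m)).length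

lemma posB_zero : posB 0 = 0 := rfl

lemma posB_succ (m : ℕ) : posB (m+1) = posB m + (tau (thue m)).length := by
  unfold posB pref
  rw [List.range_succ, List.map_append, tauW_append]
  simp [tauW]

lemma tau_len_pos : ∀ c : Fin 3, 1 ≤ (tau c).length := by decide

lemma tau_len_le : ∀ c : Fin 3, (tau c).length ≤ 3 := by decide

lemma posB_ge (m : ℕ) : m ≤ posB m := by
  induction m with
  | zero => simp [posB_zero]
  | succ m ih => have := posB_succ m; have := tau_len_pos (thue m); omega

lemma thue_zero : thue 0 = 0 := by decide

lemma posB_one : posB 1 = 3 := by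
  rw [posB_succ 0, posB_zero, thue_zero]; decide

lemma posB_ge2 (m : ℕ) (h : 1 ≤ m) : m + 2 ≤ posB m := by
  induction m with
  | zero => omega
  | succ m ih =>
    rcases Nat.eq_zero_or_pos m with rfl | hm
    · rw [posB_one]
    · have := posB_succ m; have := tau_len_pos (thue m); have := ih hm; omega

lemma block_lemma (m j : ℕ) (hj : j < (tau (thue m)).length) :
    thue (posB m + j) = (tau (thue m)).getD j 0 := by
  set k := m + posB m + j + 1 with hk
  have hm : m < (wseq k).length := by have := wseq_len k; omega
  have hdec : wseq (k+1) = tauW (pref m) ++ (tau (thue m) ++ tauW ((wseq k).drop (m+1))) := by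
    rw [wseq_succ]
    conv_lhs => rw [← List.take_append_drop m (wseq k)]
    rw [tauW_append, ← pref_eq_take k m (by omega)]
    congr 1
    rw [List.drop_eq_getElem_cons hm, tauW_cons]
    congr 2
    rw [← List.getD_eq_getElem _ 0 hm, thue_eval k m hm]
  have hlen : posB m + j < (wseq (k+1)).length := by
    rw [hdec]
    simp only [List.length_append]
    unfold posB
    omega
  rw [← thue_eval (k+1) (posB m + j) hlen, hdec]
  rw [List.getD_append_right _ _ _ _ (by unfold posB; omega)]
  have : posB m + j - (tauW (pref m)).length = j := by unfold posB; omega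
  rw [this, List.getD_append _ _ _ _ hj]

def tmN (n : ℕ) : ℕ := cond (tmb n) 1 0


lemma tmb_2m2 (m : ℕ) : tmb (2*m+2) = tmb (m+1) := by
  have : 2*m+2 = 2*(m+1) := by omega
  rw [this, tmb_two_mul]

lemma tmb_2m3 (m : ℕ) : tmb (2*m+3) = !tmb (m+1) := by
  have : 2*m+3 = 2*(m+1)+1 := by omega
  rw [this, tmb_two_mul_add_one]


theorem thue_eq_gg : ∀ n, thue n = gg n := by
  intro n
  induction n using Nat.strong_induction_on with
  | _ n ih =>
    rcases Nat.eq_zero_or_pos n with rfl | hn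
    · rw [thue_zero]
      show (0 : Fin 3) = gl (tmb 0) (tmb 1)
      rw [tmb_zero, tmb_one]
      rfl
    · set m := Nat.findGreatest (fun m => posB m ≤ n) n with hmdef
      have hPm : posB m ≤ n :=
        Nat.findGreatest_spec (P := fun m => posB m ≤ n) (Nat.zero_le n) (by simp [posB_zero])
      have hlt : n < posB (m+1) := by
        by_contra hcon
        push_neg at hcon
        have hm1n : m + 1 ≤ n := le_trans (posB_ge (m+1)) hcon
        have hgt : m < m + 1 := by omega
        exact Nat.findGreatest_is_greatest hgt hm1n hcon
      have hmn : m < n := by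
        rcases Nat.eq_zero_or_pos m with h0 | h1
        · omega
        · have := posB_ge2 m h1; omega
      have hposB : ∀ m', m' ≤ m → posB m' = 2*m' + tmN m' := by
        intro m'
        induction m' with
        | zero => intro _; simp [posB_zero, tmN, tmb_zero]
        | succ m' ih2 =>
          intro hm'
          have h1 := ih2 (by omega)
          have hthue : thue m' = gg m' := ih m' (by omega)
          rw [posB_succ, h1, hthue]
          unfold gg tmN
          cases htb : tmb m' <;> cases htb2 : tmb (m'+1) <;>
            simp only [htb, htb2, Bool.cond_false, Bool.cond_true,
              show (tau (gl false false)).length = 2 from by decide,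
              show (tau (gl false true)).length = 3 from by decide,
              show (tau (gl true false)).length = 1 from by decide,
              show (tau (gl true true)).length = 2 from by decide] <;> omega
      have hpm := hposB m le_rfl
      set j := n - posB m with hjdef
      have hjlt : j < (tau (thue m)).length := by
        have := posB_succ m; omega
      have hbl : thue n = (tau (thue m)).getD j 0 := by
        have hb := block_lemma m j hjlt
        rw [← hb]
        congr 1
        omega
      have hthm : thue m = gg m := ih m hmn
      have hn2 : n = 2*m + tmN m + j := by omega
      rw [hthm] at hjlt
      rw [hbl, hthm]
      unfold gg at hjlt ⊢
      cases hb1 : tmb m <;> cases hb2 : tmb (m+1) <;>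
          rw [hb1, hb2] at hjlt
      · -- (false, false) : gg m = 1, tau = [0,2]
        have hj2 : j < 2 := by
          rw [show (tau (gl false false)).length = 2 from by decide] at hjlt; exact hjlt
        have htm : tmN m = 0 := by unfold tmN; rw [hb1]; rfl
        interval_cases j
        · have hn' : n = 2*m := by omega
          rw [hn', tmb_two_mul, tmb_two_mul_add_one, hb1]
          decide
        · have hn' : n = 2*m+1 := by omega
          have e : 2*m+1+1 = 2*m+2 := by omega
          rw [hn', e, tmb_two_mul_add_one, tmb_2m2, hb1, hb2]
          decide
      · -- (false, true) : gg m = 0, tau = [0,1,2]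
        have hj3 : j < 3 := by
          rw [show (tau (gl false true)).length = 3 from by decide] at hjlt; exact hjlt
        have htm : tmN m = 0 := by unfold tmN; rw [hb1]; rfl
        interval_cases j
        · have hn' : n = 2*m := by omega
          rw [hn', tmb_two_mul, tmb_two_mul_add_one, hb1]
          decide
        · have hn' : n = 2*m+1 := by omega
          have e : 2*m+1+1 = 2*m+2 := by omega
          rw [hn', e, tmb_two_mul_add_one, tmb_2m2, hb1, hb2]
          decide
        · have hn' : n = 2*m+2 := by omega
          have e : 2*m+2+1 = 2*m+3 := by omega
          rw [hn', e, tmb_2m2, tmb_2m3, hb2]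
          decide
      · -- (true, false) : gg m = 2, tau = [1]
        have hj1 : j < 1 := by
          rw [show (tau (gl true false)).length = 1 from by decide] at hjlt; exact hjlt
        have htm : tmN m = 1 := by unfold tmN; rw [hb1]; rfl
        interval_cases j
        · have hn' : n = 2*m+1 := by omega
          have e : 2*m+1+1 = 2*m+2 := by omega
          rw [hn', e, tmb_two_mul_add_one, tmb_2m2, hb1, hb2]
          decide
      · -- (true, true) : gg m = 1, tau = [0,2]
        have hj2 : j < 2 := by
          rw [show (tau (gl true true)).length = 2 from by decide] at hjlt; exact hjlt
        have htm : tmN m = 1 := by unfold tmN; rw [hb1]; rfl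
        interval_cases j
        · have hn' : n = 2*m+1 := by omega
          have e : 2*m+1+1 = 2*m+2 := by omega
          rw [hn', e, tmb_two_mul_add_one, tmb_2m2, hb1, hb2]
          decide
        · have hn' : n = 2*m+2 := by omega
          have e : 2*m+2+1 = 2*m+3 := by omega
          rw [hn', e, tmb_2m2, tmb_2m3, hb2]
          decide


lemma gl_inj : ∀ a a' b b' : Bool, gl a a' = gl b b' →
    (a = b → a' = b') ∧ (a ≠ b → (a' = a ∧ b' = b)) := by decide

theorem partA : InfSquareFree thue := by
  rintro ⟨u, hu, m, hfac⟩
  set p := u.length with hp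
  have hp1 : 1 ≤ p := List.length_pos_iff.mpr hu
  have hsq : ∀ i < p, thue (m+i) = thue (m+p+i) := by
    intro i hi
    have h1 := hfac i (by simp only [List.length_append]; omega)
    have h2 := hfac (p+i) (by simp only [List.length_append]; omega)
    rw [List.getD_append _ _ _ _ (by omega)] at h1
    rw [List.getD_append_right _ _ _ _ (by omega)] at h2
    have e : p + i - u.length = i := by omega
    rw [e] at h2
    have e2 : m + (p + i) = m + p + i := by omega
    rw [e2] at h2
    exact h1.symm.trans h2
  have hgg : ∀ i < p, gl (tmb (m+i)) (tmb (m+i+1)) = gl (tmb (m+p+i)) (tmb (m+p+i+1)) := by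
    intro i hi
    have h := hsq i hi
    rw [thue_eq_gg, thue_eq_gg] at h
    exact h
  by_cases h0 : tmb m = tmb (m+p)
  · have hall : ∀ i, i ≤ p → tmb (m+i) = tmb (m+p+i) := by
      intro i
      induction i with
      | zero => intro _; simpa using h0
      | succ i ih2 =>
        intro hip
        have hi : i < p := by omega
        have hgi := hgg i hi
        have hbi := ih2 (by omega)
        have hres := (gl_inj _ _ _ _ hgi).1 hbi
        have e1 : m+(i+1) = m+i+1 := by omega
        have e2 : m+p+(i+1) = m+p+i+1 := by omega
        rw [e1, e2]; exact hres
    exact tmOF p hp1 m (fun j hj => hall j hj)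
  · have hall : ∀ i, i ≤ p → tmb (m+i) = tmb m ∧ tmb (m+p+i) = tmb (m+p) := by
      intro i
      induction i with
      | zero => intro _; constructor <;> simp
      | succ i ih2 =>
        intro hip
        have hi : i < p := by omega
        have hgi := hgg i hi
        obtain ⟨ha, hb⟩ := ih2 (by omega)
        have hne : tmb (m+i) ≠ tmb (m+p+i) := by rw [ha, hb]; exact h0
        have hres := (gl_inj _ _ _ _ hgi).2 hne
        have e1 : m+(i+1) = m+i+1 := by omega
        have e2 : m+p+(i+1) = m+p+i+1 := by omega
        rw [e1, e2, hres.1, hres.2]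
        exact ⟨ha, hb⟩
    have hfin := (hall p le_rfl).1
    exact h0 hfin.symm

-- generic square-to-factor lemma
lemma square_to_factor (x : ℕ → Fin 3) (m p : ℕ) (hp : 1 ≤ p)
    (hsq : ∀ i < p, x (m+i) = x (m+p+i)) :
    ∃ u : List (Fin 3), u ≠ [] ∧ InfFactor (u ++ u) x := by
  refine ⟨List.ofFn (fun i : Fin p => x (m+i)), ?_, m, ?_⟩
  · intro hnil
    have := congrArg List.length hnil
    simp at this
    omega
  · intro i hi
    have hlen : (List.ofFn (fun i : Fin p => x (m+i))).length = p := by simp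
    have hi2 : i < 2*p := by
      simp only [List.length_append, hlen] at hi; omega
    rcases Nat.lt_or_ge i p with h | h
    · rw [List.getD_append _ _ _ _ (by rw [hlen]; omega)]
      rw [List.getD_eq_getElem _ _ (by rw [hlen]; omega), List.getElem_ofFn]
    · rw [List.getD_append_right _ _ _ _ (by rw [hlen]; omega), hlen]
      rw [List.getD_eq_getElem _ _ (by rw [hlen]; omega), List.getElem_ofFn]
      have h1 := hsq (i-p) (by omega)
      have e1 : m + (i - p) = m + (i-p) := rfl
      have e2 : m + p + (i-p) = m + i := by omega
      rw [e2] at h1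
      exact h1

-- the window machinery
def E0fn (w : List Bool) : List Bool :=
  List.ofFn (fun i : Fin 24 =>
    if i.val % 2 = 0 then w.getD (i.val/2) false else !(w.getD (i.val/2) false))

def E1fn (w : List Bool) : List Bool :=
  List.ofFn (fun i : Fin 24 =>
    if i.val % 2 = 0 then !(w.getD (i.val/2) false) else w.getD (i.val/2+1) false)

def tmWin (m : ℕ) : List Bool := List.ofFn (fun i : Fin 24 => tmb (m + i.val))

lemma tmWin_getD (m j : ℕ) (h : j < 24) : (tmWin m).getD j false = tmb (m+j) := by
  rw [tmWin, List.getD_eq_getElem _ _ (by simpa using h), List.getElem_ofFn]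

lemma tmWin_getElem (m i : ℕ) (h : i < (tmWin m).length) : (tmWin m)[i] = tmb (m+i) := by
  unfold tmWin at h ⊢
  rw [List.getElem_ofFn]

lemma E0fn_getElem (w : List Bool) (i : ℕ) (h : i < (E0fn w).length) :
    (E0fn w)[i] = if i % 2 = 0 then w.getD (i/2) false else !(w.getD (i/2) false) := by
  unfold E0fn at h ⊢
  rw [List.getElem_ofFn]

lemma E1fn_getElem (w : List Bool) (i : ℕ) (h : i < (E1fn w).length) :
    (E1fn w)[i] = if i % 2 = 0 then !(w.getD (i/2) false) else w.getD (i/2+1) false := by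
  unfold E1fn at h ⊢
  rw [List.getElem_ofFn]

lemma tmWin_even (r : ℕ) : tmWin (2*r) = E0fn (tmWin r) := by
  apply List.ext_getElem (by simp [tmWin, E0fn])
  intro i h1 h2
  have hi : i < 24 := by simpa [tmWin] using h1
  rw [tmWin_getElem _ _ h1, E0fn_getElem _ _ h2]
  rcases Nat.even_or_odd i with ⟨c, hc⟩ | ⟨c, hc⟩
  · rw [if_pos (by omega : i % 2 = 0)]
    rw [tmWin_getD r (i/2) (by omega)]
    have e : 2*r + i = 2*(r + i/2) := by omega
    rw [e, tmb_two_mul]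
  · rw [if_neg (by omega : ¬ i % 2 = 0)]
    rw [tmWin_getD r (i/2) (by omega)]
    have e : 2*r + i = 2*(r + i/2) + 1 := by omega
    rw [e, tmb_two_mul_add_one]

lemma tmWin_odd (r : ℕ) : tmWin (2*r+1) = E1fn (tmWin r) := by
  apply List.ext_getElem (by simp [tmWin, E1fn])
  intro i h1 h2
  have hi : i < 24 := by simpa [tmWin] using h1
  rw [tmWin_getElem _ _ h1, E1fn_getElem _ _ h2]
  rcases Nat.even_or_odd i with ⟨c, hc⟩ | ⟨c, hc⟩
  · rw [if_pos (by omega : i % 2 = 0)]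
    rw [tmWin_getD r (i/2) (by omega)]
    have e : 2*r + 1 + i = 2*(r + i/2) + 1 := by omega
    rw [e, tmb_two_mul_add_one]
  · rw [if_neg (by omega : ¬ i % 2 = 0)]
    rw [tmWin_getD r (i/2+1) (by omega)]
    have e : 2*r + 1 + i = 2*(r + i/2 + 1) := by omega
    rw [e, tmb_two_mul]
    rfl

def S24 : List (List Bool) := [
[false,false,true,false,true,true,false,false,true,true,false,true,false,false,true,false,true,true,false,true,false,false,true,true],
[false,false,true,false,true,true,false,false,true,true,false,true,false,false,true,true,false,false,true,false,true,true,false,false],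
[false,false,true,false,true,true,false,false,true,true,false,true,false,false,true,true,false,false,true,false,true,true,false,true],
[false,false,true,false,true,true,false,true,false,false,true,false,true,true,false,false,true,true,false,true,false,false,true,false],
[false,false,true,false,true,true,false,true,false,false,true,false,true,true,false,false,true,true,false,true,false,false,true,true],
[false,false,true,false,true,true,false,true,false,false,true,true,false,false,true,false,true,true,false,false,true,true,false,true],
[false,false,true,false,true,true,false,true,false,false,true,true,false,false,true,false,true,true,false,true,false,false,true,false],
[false,false,true,true,false,false,true,false,true,true,false,false,true,true,false,true,false,false,true,false,true,true,false,true],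
[false,false,true,true,false,false,true,false,true,true,false,false,true,true,false,true,false,false,true,true,false,false,true,false],
[false,false,true,true,false,false,true,false,true,true,false,true,false,false,true,false,true,true,false,false,true,true,false,true],
[false,false,true,true,false,true,false,false,true,false,true,true,false,true,false,false,true,true,false,false,true,false,true,true],
[false,false,true,true,false,true,false,false,true,true,false,false,true,false,true,true,false,false,true,true,false,true,false,false],
[false,false,true,true,false,true,false,false,true,true,false,false,true,false,true,true,false,true,false,false,true,false,true,true],
[false,true,false,false,true,false,true,true,false,false,true,true,false,true,false,false,true,false,true,true,false,true,false,false],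
[false,true,false,false,true,false,true,true,false,false,true,true,false,true,false,false,true,true,false,false,true,false,true,true],
[false,true,false,false,true,false,true,true,false,true,false,false,true,true,false,false,true,false,true,true,false,false,true,true],
[false,true,false,false,true,false,true,true,false,true,false,false,true,true,false,false,true,false,true,true,false,true,false,false],
[false,true,false,false,true,true,false,false,true,false,true,true,false,false,true,true,false,true,false,false,true,false,true,true],
[false,true,false,false,true,true,false,false,true,false,true,true,false,false,true,true,false,true,false,false,true,true,false,false],
[false,true,false,false,true,true,false,false,true,false,true,true,false,true,false,false,true,false,true,true,false,false,true,true],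
[false,true,false,true,true,false,false,true,true,false,true,false,false,true,false,true,true,false,true,false,false,true,true,false],
[false,true,false,true,true,false,false,true,true,false,true,false,false,true,true,false,false,true,false,true,true,false,false,true],
[false,true,false,true,true,false,false,true,true,false,true,false,false,true,true,false,false,true,false,true,true,false,true,false],
[false,true,false,true,true,false,true,false,false,true,false,true,true,false,false,true,true,false,true,false,false,true,false,true],
[false,true,false,true,true,false,true,false,false,true,false,true,true,false,false,true,true,false,true,false,false,true,true,false],
[false,true,false,true,true,false,true,false,false,true,true,false,false,true,false,true,true,false,false,true,true,false,true,false],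
[false,true,false,true,true,false,true,false,false,true,true,false,false,true,false,true,true,false,true,false,false,true,false,true],
[false,true,true,false,false,true,false,true,true,false,false,true,true,false,true,false,false,true,false,true,true,false,true,false],
[false,true,true,false,false,true,false,true,true,false,false,true,true,false,true,false,false,true,true,false,false,true,false,true],
[false,true,true,false,false,true,false,true,true,false,true,false,false,true,false,true,true,false,false,true,true,false,true,false],
[false,true,true,false,false,true,true,false,true,false,false,true,false,true,true,false,true,false,false,true,true,false,false,true],
[false,true,true,false,false,true,true,false,true,false,false,true,true,false,false,true,false,true,true,false,false,true,true,false],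
[false,true,true,false,false,true,true,false,true,false,false,true,true,false,false,true,false,true,true,false,true,false,false,true],
[false,true,true,false,true,false,false,true,false,true,true,false,false,true,true,false,true,false,false,true,false,true,true,false],
[false,true,true,false,true,false,false,true,false,true,true,false,false,true,true,false,true,false,false,true,true,false,false,true],
[false,true,true,false,true,false,false,true,false,true,true,false,true,false,false,true,true,false,false,true,false,true,true,false],
[false,true,true,false,true,false,false,true,true,false,false,true,false,true,true,false,false,true,true,false,true,false,false,true],
[false,true,true,false,true,false,false,true,true,false,false,true,false,true,true,false,true,false,false,true,false,true,true,false],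
[true,false,false,true,false,true,true,false,false,true,true,false,true,false,false,true,false,true,true,false,true,false,false,true],
[true,false,false,true,false,true,true,false,false,true,true,false,true,false,false,true,true,false,false,true,false,true,true,false],
[true,false,false,true,false,true,true,false,true,false,false,true,false,true,true,false,false,true,true,false,true,false,false,true],
[true,false,false,true,false,true,true,false,true,false,false,true,true,false,false,true,false,true,true,false,false,true,true,false],
[true,false,false,true,false,true,true,false,true,false,false,true,true,false,false,true,false,true,true,false,true,false,false,true],
[true,false,false,true,true,false,false,true,false,true,true,false,false,true,true,false,true,false,false,true,false,true,true,false],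
[true,false,false,true,true,false,false,true,false,true,true,false,false,true,true,false,true,false,false,true,true,false,false,true],
[true,false,false,true,true,false,false,true,false,true,true,false,true,false,false,true,false,true,true,false,false,true,true,false],
[true,false,false,true,true,false,true,false,false,true,false,true,true,false,true,false,false,true,true,false,false,true,false,true],
[true,false,false,true,true,false,true,false,false,true,true,false,false,true,false,true,true,false,false,true,true,false,true,false],
[true,false,false,true,true,false,true,false,false,true,true,false,false,true,false,true,true,false,true,false,false,true,false,true],
[true,false,true,false,false,true,false,true,true,false,false,true,true,false,true,false,false,true,false,true,true,false,true,false],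
[true,false,true,false,false,true,false,true,true,false,false,true,true,false,true,false,false,true,true,false,false,true,false,true],
[true,false,true,false,false,true,false,true,true,false,true,false,false,true,true,false,false,true,false,true,true,false,false,true],
[true,false,true,false,false,true,false,true,true,false,true,false,false,true,true,false,false,true,false,true,true,false,true,false],
[true,false,true,false,false,true,true,false,false,true,false,true,true,false,false,true,true,false,true,false,false,true,false,true],
[true,false,true,false,false,true,true,false,false,true,false,true,true,false,false,true,true,false,true,false,false,true,true,false],
[true,false,true,false,false,true,true,false,false,true,false,true,true,false,true,false,false,true,false,true,true,false,false,true],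
[true,false,true,true,false,false,true,true,false,true,false,false,true,false,true,true,false,true,false,false,true,true,false,false],
[true,false,true,true,false,false,true,true,false,true,false,false,true,true,false,false,true,false,true,true,false,false,true,true],
[true,false,true,true,false,false,true,true,false,true,false,false,true,true,false,false,true,false,true,true,false,true,false,false],
[true,false,true,true,false,true,false,false,true,false,true,true,false,false,true,true,false,true,false,false,true,false,true,true],
[true,false,true,true,false,true,false,false,true,false,true,true,false,false,true,true,false,true,false,false,true,true,false,false],
[true,false,true,true,false,true,false,false,true,true,false,false,true,false,true,true,false,false,true,true,false,true,false,false],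
[true,false,true,true,false,true,false,false,true,true,false,false,true,false,true,true,false,true,false,false,true,false,true,true],
[true,true,false,false,true,false,true,true,false,false,true,true,false,true,false,false,true,false,true,true,false,true,false,false],
[true,true,false,false,true,false,true,true,false,false,true,true,false,true,false,false,true,true,false,false,true,false,true,true],
[true,true,false,false,true,false,true,true,false,true,false,false,true,false,true,true,false,false,true,true,false,true,false,false],
[true,true,false,false,true,true,false,true,false,false,true,false,true,true,false,true,false,false,true,true,false,false,true,false],
[true,true,false,false,true,true,false,true,false,false,true,true,false,false,true,false,true,true,false,false,true,true,false,true],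
[true,true,false,false,true,true,false,true,false,false,true,true,false,false,true,false,true,true,false,true,false,false,true,false],
[true,true,false,true,false,false,true,false,true,true,false,false,true,true,false,true,false,false,true,false,true,true,false,true],
[true,true,false,true,false,false,true,false,true,true,false,false,true,true,false,true,false,false,true,true,false,false,true,false],
[true,true,false,true,false,false,true,false,true,true,false,true,false,false,true,true,false,false,true,false,true,true,false,false],
[true,true,false,true,false,false,true,false,true,true,false,true,false,false,true,true,false,false,true,false,true,true,false,true],
[true,true,false,true,false,false,true,true,false,false,true,false,true,true,false,false,true,true,false,true,false,false,true,false],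
[true,true,false,true,false,false,true,true,false,false,true,false,true,true,false,false,true,true,false,true,false,false,true,true],
[true,true,false,true,false,false,true,true,false,false,true,false,true,true,false,true,false,false,true,false,true,true,false,false]]


lemma S24_closed : ∀ w ∈ S24, E0fn w ∈ S24 ∧ E1fn w ∈ S24 := by decide

lemma tmWin_mem : ∀ m, tmWin m ∈ S24 := by
  intro m
  induction m using Nat.strong_induction_on with
  | _ m ih =>
    rcases Nat.lt_or_ge m 2 with h2 | h2
    · interval_cases m
      · decide
      · decide
    · rcases Nat.even_or_odd m with ⟨c, hc⟩ | ⟨c, hc⟩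
      · have e : m = 2*c := by omega
        rw [e, tmWin_even]
        exact (S24_closed _ (ih c (by omega))).1
      · have e : m = 2*c+1 := by omega
        rw [e, tmWin_odd]
        exact (S24_closed _ (ih c (by omega))).2

def zfun (v : List Bool) (r : ℕ) : Fin 3 :=
  if r < 13 then gl (v.getD r false) (v.getD (r+1) false)
  else gl (v.getD (r+2) false) (v.getD (r+3) false)

def okWinB (v : List Bool) : Bool :=
  (List.range 20).any fun s => (List.range 10).any fun q =>
    decide (s + 2*(q+1) ≤ 21) &&
      ((List.range (q+1)).all fun i => zfun v (s+i) == zfun v (s+(q+1)+i))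

lemma S24_ok : ∀ w ∈ S24, okWinB w = true := by decide

lemma okWinB_spec (v : List Bool) (h : okWinB v = true) :
    ∃ s p, 1 ≤ p ∧ s + 2*p ≤ 21 ∧ ∀ i < p, zfun v (s+i) = zfun v (s+p+i) := by
  unfold okWinB at h
  simp only [List.any_eq_true, List.mem_range, List.all_eq_true, Bool.and_eq_true,
    decide_eq_true_eq, beq_iff_eq] at h
  obtain ⟨s, _, q, _, h1, h2⟩ := h
  exact ⟨s, q+1, by omega, h1, fun i hi => h2 i hi⟩

lemma zfun_sem (n : ℕ) (hn : 13 ≤ n) (r : ℕ) (hr : r < 21) :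
    zfun (tmWin (n-13)) r = delTwoAt thue n (n-13+r) := by
  unfold zfun delTwoAt
  rcases Nat.lt_or_ge r 13 with h | h
  · rw [if_pos h, if_pos (by omega)]
    rw [thue_eq_gg]
    unfold gg
    rw [tmWin_getD _ _ (by omega), tmWin_getD _ _ (by omega)]
    rfl
  · rw [if_neg (by omega : ¬ r < 13), if_neg (by omega : ¬ n - 13 + r < n)]
    rw [thue_eq_gg]
    unfold gg
    rw [tmWin_getD _ _ (by omega), tmWin_getD _ _ (by omega)]
    congr 2 <;> omega

lemma partB_big (n : ℕ) (hn : 13 ≤ n) :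
    ∃ u : List (Fin 3), u ≠ [] ∧ InfFactor (u ++ u) (delTwoAt thue n) := by
  obtain ⟨s, p, hp1, hle, hsq⟩ := okWinB_spec _ (S24_ok _ (tmWin_mem (n-13)))
  apply square_to_factor (delTwoAt thue n) (n-13+s) p hp1
  intro i hi
  have h1 := hsq i hi
  rw [zfun_sem n hn _ (by omega), zfun_sem n hn _ (by omega)] at h1
  have e1 : n - 13 + (s + i) = n - 13 + s + i := by omega
  have e2 : n - 13 + (s + p + i) = n - 13 + s + p + i := by omega
  rw [e1, e2] at h1
  exact h1

-- small n
lemma thue_small (j : ℕ) (h : j < 48) : thue j = (wseq 5).getD j 0 := by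
  have hl : (wseq 5).length = 48 := by decide
  exact (thue_eval 5 j (by omega)).symm

lemma partB_small (n m p : ℕ) (hp : 1 ≤ p) (hbound : m + 2*p + 2 ≤ 46)
    (hsq : ∀ i < p,
      (if m+i < n then (wseq 5).getD (m+i) 0 else (wseq 5).getD (m+i+2) 0)
      = (if m+p+i < n then (wseq 5).getD (m+p+i) 0 else (wseq 5).getD (m+p+i+2) 0)) :
    ∃ u : List (Fin 3), u ≠ [] ∧ InfFactor (u ++ u) (delTwoAt thue n) := by
  apply square_to_factor (delTwoAt thue n) m p hp
  intro i hi
  have h1 := hsq i hi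
  unfold delTwoAt
  rcases Nat.lt_or_ge (m+i) n with h | h <;>
    rcases Nat.lt_or_ge (m+p+i) n with h' | h'
  · rw [if_pos h, if_pos h']
    rw [if_pos h, if_pos h'] at h1
    rw [thue_small _ (by omega), thue_small _ (by omega)]
    exact h1
  · rw [if_pos h, if_neg (by omega)]
    rw [if_pos h, if_neg (by omega)] at h1
    rw [thue_small _ (by omega), thue_small _ (by omega)]
    exact h1
  · rw [if_neg (by omega), if_pos h']
    rw [if_neg (by omega), if_pos h'] at h1
    rw [thue_small _ (by omega), thue_small _ (by omega)]
    exact h1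
  · rw [if_neg (by omega), if_neg (by omega)]
    rw [if_neg (by omega), if_neg (by omega)] at h1
    rw [thue_small _ (by omega), thue_small _ (by omega)]
    exact h1

theorem thue_2irreducibly_squareFree :
    InfSquareFree thue ∧
      ∀ n : ℕ, 1 ≤ n →
        ∃ u : List (Fin 3), u ≠ [] ∧ InfFactor (u ++ u) (delTwoAt thue n) := by
  refine ⟨partA, ?_⟩
  intro n hn
  rcases Nat.lt_or_ge n 13 with h | h
  · interval_cases n
    · exact partB_small 1 0 1 (by norm_num) (by norm_num) (by decide)
    · exact partB_small 2 0 4 (by norm_num) (by norm_num) (by decide)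
    · exact partB_small 3 0 4 (by norm_num) (by norm_num) (by decide)
    · exact partB_small 4 3 1 (by norm_num) (by norm_num) (by decide)
    · exact partB_small 5 4 2 (by norm_num) (by norm_num) (by decide)
    · exact partB_small 6 4 2 (by norm_num) (by norm_num) (by decide)
    · exact partB_small 7 5 2 (by norm_num) (by norm_num) (by decide)
    · exact partB_small 8 5 2 (by norm_num) (by norm_num) (by decide)
    · exact partB_small 9 8 1 (by norm_num) (by norm_num) (by decide)
    · exact partB_small 10 4 4 (by norm_num) (by norm_num) (by decide)
    · exact partB_small 11 4 4 (by norm_num) (by norm_num) (by decide)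
    · exact partB_small 12 11 1 (by norm_num) (by norm_num) (by decide)
  · exact partB_big n h
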